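/- Let (X,d) be a metric space, C ⊆ X a nonempty finite set with designated center s ∈ X, p ≤ 0.4, n ≥ 1 an integer, and δ ∈ (0, 1/2]. Let u₁, u₂ ∈ C with d(u₁,s) ≤ d(u₂,s), and suppose |{x ∈ C : d(u₁,s) ≤ d(x,s) < d(u₂,s)}| ≥ √(100·|C|·ln(n/δ)). For i = 1,2 let Count(u_i) = Σ_{x ∈ C} B_{x,u_i}, where all the random variables B_{x,u_i} (over x ∈ C and i ∈ {1,2}) are mutually independent {0,1}-valued, with ℙ(B_{x,u_i} = 1) = 1 − p if d(x,s) ≥ d(u_i,s) and ℙ(B_{x,u_i} = 1) = p if d(x,s) < d(u_i,s). Then ℙ(Count(u₁) > Count(u₂)) ≥ 1 − δ/n². -/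

import Mathlib

open MeasureTheory ProbabilityTheory

lemma aux_two_point (w y1 y2 c t : ℝ) (hw0 : 0 ≤ w) (hw1 : w ≤ 1)
    (hmean : w * y1 + (1 - w) * y2 = 0) (hc : 0 < c)
    (h1 : |y1| ≤ c) (h2 : |y2| ≤ c) :
    w * Real.exp (t * y1) + (1 - w) * Real.exp (t * y2) ≤ Real.exp (t ^ 2 * c ^ 2 / 2) := by
  set E := Real.exp (t * c) with hE
  set F := Real.exp (-(t * c)) with hF
  have key : ∀ y : ℝ, |y| ≤ c →
      Real.exp (t * y) * (2 * c) ≤ (c + y) * E + (c - y) * F := by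
    intro y hy
    obtain ⟨hy1, hy2⟩ := abs_le.mp hy
    have hθ0 : 0 ≤ (c + y) / (2 * c) := div_nonneg (by linarith) (by linarith)
    have hθ1 : 0 ≤ (c - y) / (2 * c) := div_nonneg (by linarith) (by linarith)
    have hc' : (2 * c : ℝ) ≠ 0 := by positivity
    have hsum : (c + y) / (2 * c) + (c - y) / (2 * c) = 1 := by
      field_simp; ring
    have hcvx := convexOn_exp.2 (Set.mem_univ (t * c)) (Set.mem_univ (-(t * c))) hθ0 hθ1 hsum
    simp only [smul_eq_mul] at hcvx
    have hmul : ∀ z : ℝ, z / (2 * c) * (t * c) = z * t / 2 := by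
      intro z
      rw [div_mul_eq_mul_div, show z * (t * c) = z * t * c by ring,
        mul_div_mul_right _ _ hc.ne']
    have harg : (c + y) / (2 * c) * (t * c) + (c - y) / (2 * c) * (-(t * c)) = t * y := by
      rw [mul_neg, hmul, hmul]; ring
    rw [harg] at hcvx
    simp only [← hE, ← hF] at hcvx
    have := mul_le_mul_of_nonneg_right hcvx (le_of_lt (by positivity : (0:ℝ) < 2 * c))
    calc Real.exp (t * y) * (2 * c) ≤ ((c + y) / (2 * c) * E + (c - y) / (2 * c) * F) * (2 * c) :=
          this
      _ = (c + y) * E + (c - y) * F := by field_simp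
  have P1 := mul_le_mul_of_nonneg_left (key y1 h1) hw0
  have P2 := mul_le_mul_of_nonneg_left (key y2 h2) (by linarith : (0:ℝ) ≤ 1 - w)
  have heq : w * ((c + y1) * E + (c - y1) * F) + (1 - w) * ((c + y2) * E + (c - y2) * F)
      = c * E + c * F := by linear_combination (E - F) * hmean
  have H : (w * Real.exp (t * y1) + (1 - w) * Real.exp (t * y2)) * (2 * c) ≤ c * (E + F) := by
    linarith [P1, P2, heq]
  have h2A : (w * Real.exp (t * y1) + (1 - w) * Real.exp (t * y2)) * 2 ≤ E + F := by
    have := H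
    rw [show (w * Real.exp (t * y1) + (1 - w) * Real.exp (t * y2)) * (2 * c)
        = c * ((w * Real.exp (t * y1) + (1 - w) * Real.exp (t * y2)) * 2) by ring] at this
    exact le_of_mul_le_mul_left this hc
  have hcosh : (E + F) / 2 = Real.cosh (t * c) := by rw [Real.cosh_eq]
  have hch := Real.cosh_le_exp_half_sq (t * c)
  have : w * Real.exp (t * y1) + (1 - w) * Real.exp (t * y2) ≤ Real.exp ((t * c) ^ 2 / 2) := by
    linarith [h2A, hcosh, hch]
  calc w * Real.exp (t * y1) + (1 - w) * Real.exp (t * y2) ≤ Real.exp ((t * c) ^ 2 / 2) := this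
    _ = Real.exp (t ^ 2 * c ^ 2 / 2) := by rw [mul_pow]

lemma aux_bool_fun_eq {Ω : Type*} (b : Ω → Bool) (a c : ℝ) :
    (fun ω => if b ω = true then a else c)
      = fun ω => Set.indicator {ω | b ω = true} (fun _ => a - c) ω + c := by
  funext ω
  by_cases h : b ω = true <;> simp [Set.indicator_apply, h]

lemma aux_meas_set {Ω : Type*} [MeasurableSpace Ω] {b : Ω → Bool} (hb : Measurable b) :
    MeasurableSet {ω | b ω = true} := by
  have : {ω | b ω = true} = b ⁻¹' {true} := by ext ω; simp
  rw [this]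
  exact hb (measurableSet_singleton true)

lemma aux_integrable_bool {Ω : Type*} [MeasurableSpace Ω] (P : Measure Ω)
    [IsProbabilityMeasure P] {b : Ω → Bool} (hb : Measurable b) (a c : ℝ) :
    Integrable (fun ω => if b ω = true then a else c) P := by
  rw [aux_bool_fun_eq]
  exact ((integrable_const (a - c)).indicator (aux_meas_set hb)).add (integrable_const c)

lemma aux_integral_bool {Ω : Type*} [MeasurableSpace Ω] (P : Measure Ω)
    [IsProbabilityMeasure P] {b : Ω → Bool} (hb : Measurable b) (a c : ℝ) :
    ∫ ω, (if b ω = true then a else c) ∂P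
      = (P {ω | b ω = true}).toReal * a + (1 - (P {ω | b ω = true}).toReal) * c := by
  rw [aux_bool_fun_eq, integral_add ((integrable_const (a - c)).indicator (aux_meas_set hb))
    (integrable_const c), integral_indicator_const _ (aux_meas_set hb), integral_const]
  simp only [smul_eq_mul, measureReal_def, measure_univ, ENNReal.toReal_one, one_mul]
  ring



lemma aux_numeric (p K L g : ℝ) (hp0 : 0 ≤ p) (hp' : p ≤ 2 / 5) (hK1 : 1 ≤ K)
    (hL : 0 < L) (hg0 : 0 < g) (hg2 : 100 * K * L ≤ g ^ 2) :
    -((1 - 2 * p) * g) / (2 * K * (1 - p) ^ 2) * ((1 - 2 * p) * g)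
      + K * ((-((1 - 2 * p) * g) / (2 * K * (1 - p) ^ 2)) ^ 2 * (1 - p) ^ 2) ≤ -(2 * L) := by
  have hK0 : (0:ℝ) < K := by linarith
  have h1p : (0:ℝ) < 1 - p := by linarith
  have heq : -((1 - 2 * p) * g) / (2 * K * (1 - p) ^ 2) * ((1 - 2 * p) * g)
      + K * ((-((1 - 2 * p) * g) / (2 * K * (1 - p) ^ 2)) ^ 2 * (1 - p) ^ 2)
      = -(((1 - 2 * p) * g) ^ 2 / (4 * K * (1 - p) ^ 2)) := by
    have hKne : K ≠ 0 := ne_of_gt hK0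
    have hpne : (1 - p) ≠ 0 := ne_of_gt h1p
    field_simp
    ring
  rw [heq, neg_le_neg_iff, le_div_iff₀ (by positivity : (0:ℝ) < 4 * K * (1 - p) ^ 2)]
  have hKL : (0:ℝ) < K * L := mul_pos hK0 hL
  have h1 : (1 - 2 * p) ^ 2 * (100 * K * L) ≤ (1 - 2 * p) ^ 2 * g ^ 2 :=
    mul_le_mul_of_nonneg_left hg2 (sq_nonneg _)
  nlinarith [mul_nonneg hKL.le (sq_nonneg (p - 2 / 5)),
    mul_nonneg hKL.le (show (0:ℝ) ≤ 2 / 5 - p by linarith), hKL.le, h1]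

lemma aux_mgf_bound {Ω : Type*} [MeasurableSpace Ω] (P : Measure Ω) [IsProbabilityMeasure P]
    {b : Ω → Bool} (hb : Measurable b) (sg q c t p : ℝ)
    (hqv : (P {ω | b ω = true}).toReal = q)
    (hq01 : q = p ∨ q = 1 - p) (hsg : sg = 1 ∨ sg = -1)
    (hp0 : 0 ≤ p) (hp' : p ≤ 2 / 5) (hc : c = 1 - p) :
    mgf (fun ω => sg * (if b ω = true then 1 else 0)) P t
      ≤ Real.exp (t * (sg * q) + t ^ 2 * c ^ 2 / 2) := by
  have hcpos : 0 < c := by rw [hc]; linarith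
  have hq0 : 0 ≤ q := by rcases hq01 with h | h <;> rw [h] <;> linarith
  have hq1 : q ≤ 1 := by rcases hq01 with h | h <;> rw [h] <;> linarith
  have hfun : (fun ω => Real.exp (t * (sg * (if b ω = true then 1 else 0))))
      = fun ω => if b ω = true then Real.exp (t * sg) else 1 := by
    funext ω
    by_cases h : b ω = true <;> simp [h]
  have hval : mgf (fun ω => sg * (if b ω = true then 1 else 0)) P t
      = q * Real.exp (t * sg) + (1 - q) * 1 := by
    have h0 : mgf (fun ω => sg * (if b ω = true then 1 else 0)) P t
        = ∫ ω, Real.exp (t * (sg * (if b ω = true then 1 else 0))) ∂P := rfl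
    rw [h0, hfun, aux_integral_bool P hb _ 1, hqv]
  have e1 : Real.exp (t * (sg * q)) * Real.exp (t * (sg - sg * q)) = Real.exp (t * sg) := by
    rw [← Real.exp_add]; congr 1; ring
  have e2 : Real.exp (t * (sg * q)) * Real.exp (t * (-(sg * q))) = 1 := by
    rw [← Real.exp_add, show t * (sg * q) + t * (-(sg * q)) = 0 by ring, Real.exp_zero]
  have hy1 : |sg - sg * q| ≤ c := by
    rcases hsg with h | h <;> rcases hq01 with h' | h' <;>
      rw [h, h', hc, abs_le] <;> constructor <;> nlinarith
  have hy2 : |(-(sg * q))| ≤ c := by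
    rcases hsg with h | h <;> rcases hq01 with h' | h' <;>
      rw [h, h', hc, abs_le] <;> constructor <;> nlinarith
  have hmean : q * (sg - sg * q) + (1 - q) * (-(sg * q)) = 0 := by ring
  calc mgf (fun ω => sg * (if b ω = true then 1 else 0)) P t
      = Real.exp (t * (sg * q)) * (q * Real.exp (t * (sg - sg * q))
          + (1 - q) * Real.exp (t * (-(sg * q)))) := by
        rw [hval]
        linear_combination (-q) * e1 - (1 - q) * e2
    _ ≤ Real.exp (t * (sg * q)) * Real.exp (t ^ 2 * c ^ 2 / 2) :=
        mul_le_mul_of_nonneg_left (aux_two_point q (sg - sg * q) (-(sg * q)) c t hq0 hq1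
          hmean hcpos hy1 hy2) (Real.exp_pos _).le
    _ = Real.exp (t * (sg * q) + t ^ 2 * c ^ 2 / 2) := (Real.exp_add _ _).symm


set_option maxHeartbeats 1000000 in
/-- **Count-score separation for core identification (Lemma, probabilistic noise).**
For `u ∈ {u₁, u₂} ⊆ C`, `Count u = Σ_{x ∈ C} B_{x,u}` where all the Boolean random
variables `B_{x,u_i}` (over `x ∈ C`, `i ∈ {1,2}`) are mutually independent with success
probability `1 − p` if `d(x,s) ≥ d(u,s)` and `p` otherwise, `p ≤ 0.4`. If
`d(u₁,s) ≤ d(u₂,s)` and at least `√(100·|C|·ln(n/δ))` points of `C` lie between them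
in distance from `s`, then `Count u₁ > Count u₂` with probability at least `1 − δ/n²`. -/
theorem stmt_12 {X : Type*} [MetricSpace X] (C : Finset X) (hC : C.Nonempty) (s : X)
    (p : ℝ) (hp : p ≤ 0.4)
    (n : ℕ) (hn : 1 ≤ n) (δ : ℝ) (hδ : δ ∈ Set.Ioc (0 : ℝ) (1 / 2))
    (u₁ u₂ : X) (hu₁ : u₁ ∈ C) (hu₂ : u₂ ∈ C) (h12 : dist u₁ s ≤ dist u₂ s)
    (hgap : Real.sqrt (100 * (C.card : ℝ) * Real.log (n / δ)) ≤
      ((C.filter (fun x => dist u₁ s ≤ dist x s ∧ dist x s < dist u₂ s)).card : ℝ))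
    {Ω : Type*} [MeasurableSpace Ω] (P : Measure Ω) [IsProbabilityMeasure P]
    (B : X → X → Ω → Bool) (hmeas : ∀ x u, Measurable (B x u))
    (hindep : iIndepFun
      (fun xi : C × Fin 2 => B (xi.1 : X) (if xi.2 = 0 then u₁ else u₂)) P)
    (hdist : ∀ u ∈ ({u₁, u₂} : Set X), ∀ x ∈ C,
      (P {ω | B x u ω = true}).toReal = if dist u s ≤ dist x s then 1 - p else p) :
    1 - δ / (n : ℝ) ^ 2 ≤
      (P {ω | (C.filter (fun x => B x u₂ ω = true)).card <
        (C.filter (fun x => B x u₁ ω = true)).card}).toReal := by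
  obtain ⟨hδ0, hδ1⟩ := hδ
  have hp' : p ≤ 2 / 5 := by norm_num at hp; linarith
  set G := C.filter (fun x => dist u₁ s ≤ dist x s ∧ dist x s < dist u₂ s) with hG
  set K : ℝ := (C.card : ℝ) with hK
  set L : ℝ := Real.log (↑n / δ) with hLdef
  set g : ℝ := (G.card : ℝ) with hgdef
  have hK1 : (1 : ℝ) ≤ K := by
    have := hC.card_pos
    rw [hK]; exact_mod_cast this
  have hn1 : (1 : ℝ) ≤ (n : ℝ) := by exact_mod_cast hn
  have hnδ : (2 : ℝ) ≤ (n : ℝ) / δ := by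
    rw [le_div_iff₀ hδ0]; nlinarith
  have hL : 0 < L := Real.log_pos (by linarith)
  have h100 : (0:ℝ) < 100 * K * L :=
    mul_pos (mul_pos (by norm_num : (0:ℝ) < 100) (by linarith : (0:ℝ) < K)) hL
  have hsq : 0 < Real.sqrt (100 * K * L) := Real.sqrt_pos.mpr h100
  have hg0 : 0 < g := lt_of_lt_of_le hsq hgap
  have hg2 : 100 * K * L ≤ g ^ 2 := by
    have h := Real.sq_sqrt h100.le
    calc 100 * K * L = (Real.sqrt (100 * K * L)) ^ 2 := h.symm
      _ ≤ g ^ 2 := pow_le_pow_left₀ (Real.sqrt_nonneg _) hgap 2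
  have hGne : G.Nonempty := by
    rw [← Finset.card_pos]
    have : (0 : ℝ) < (G.card : ℝ) := hg0
    exact_mod_cast this
  obtain ⟨x₀, hx₀⟩ := hGne
  rw [hG, Finset.mem_filter] at hx₀
  have hp0 : 0 ≤ p := by
    have h := hdist u₂ (by simp) x₀ hx₀.1
    rw [if_neg (not_le.mpr hx₀.2.2)] at h
    rw [← h]; exact ENNReal.toReal_nonneg
  set c : ℝ := 1 - p with hc
  have hcpos : 0 < c := by rw [hc]; linarith
  -- the random variables
  set u_ : C × Fin 2 → X := fun i => if i.2 = 0 then u₁ else u₂ with hu_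
  set sg : C × Fin 2 → ℝ := fun i => if i.2 = 0 then 1 else -1 with hsg_
  set Y : C × Fin 2 → Ω → ℝ :=
    fun i ω => sg i * (if B (i.1 : X) (u_ i) ω = true then 1 else 0) with hY
  have hYmeas : ∀ i, Measurable (Y i) := by
    intro i
    exact ((Measurable.of_discrete
      (f := fun b : Bool => if b = true then (1:ℝ) else 0)).comp (hmeas _ _)).const_mul (sg i)
  have hYindep : iIndepFun Y P := by
    exact hindep.comp (fun i (b : Bool) => sg i * (if b = true then (1:ℝ) else 0))
      (fun i => Measurable.of_discrete)
  set q : C × Fin 2 → ℝ := fun i => (P {ω | B (i.1 : X) (u_ i) ω = true}).toReal with hqdef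
  have hq : ∀ i : C × Fin 2,
      q i = if dist (u_ i) s ≤ dist (i.1 : X) s then 1 - p else p := by
    rintro ⟨x, j⟩
    have hmem : u_ (x, j) ∈ ({u₁, u₂} : Set X) := by
      by_cases h : j = 0 <;> simp [hu_, h]
    exact hdist _ hmem (x : X) x.2
  have hq01 : ∀ i, q i = p ∨ q i = 1 - p := by
    intro i
    rw [hq i]
    by_cases h : dist (u_ i) s ≤ dist (i.1 : X) s
    · right; rw [if_pos h]
    · left; rw [if_neg h]
  have hsgval : ∀ i, sg i = 1 ∨ sg i = -1 := by
    intro i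
    by_cases h : i.2 = 0
    · left; simp [hsg_, h]
    · right; simp [hsg_, h]
  -- parameters
  set μS : ℝ := (1 - 2 * p) * g with hμS
  have hμSpos : 0 < μS := mul_pos (by linarith) hg0
  set t : ℝ := -μS / (2 * K * c ^ 2) with ht
  have ht0 : t ≤ 0 := by
    rw [ht]
    apply div_nonpos_of_nonpos_of_nonneg (by linarith)
    exact mul_nonneg (mul_nonneg (by norm_num) (by linarith : (0:ℝ) ≤ K)) (sq_nonneg c)
  -- pointwise exp formula
  have hfun : ∀ i : C × Fin 2, (fun ω => Real.exp (t * Y i ω))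
      = fun ω => if B (i.1 : X) (u_ i) ω = true then Real.exp (t * sg i) else 1 := by
    intro i
    funext ω
    by_cases h : B (i.1 : X) (u_ i) ω = true <;> simp [hY, h]
  -- per-variable mgf bound
  have hmgf_le : ∀ i : C × Fin 2,
      mgf (Y i) P t ≤ Real.exp (t * (sg i * q i) + t ^ 2 * c ^ 2 / 2) := by
    intro i
    exact aux_mgf_bound P (hmeas _ _) (sg i) (q i) c t p rfl (hq01 i) (hsgval i) hp0 hp' hc
  -- sum of means
  have hmeans : ∑ i : C × Fin 2, sg i * q i = μS := by
    have hterm : ∀ i : C × Fin 2, sg i * q i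
        = sg i * (if dist (u_ i) s ≤ dist (i.1 : X) s then 1 - p else p) := by
      intro i; rw [hq i]
    rw [Finset.sum_congr rfl (fun i _ => hterm i), Fintype.sum_prod_type]
    have hinner : ∀ x : {y // y ∈ C},
        ∑ j : Fin 2, sg (x, j) * (if dist (u_ (x, j)) s ≤ dist (x : X) s then 1 - p else p)
        = if dist u₁ s ≤ dist (x : X) s ∧ dist (x : X) s < dist u₂ s then 1 - 2 * p else 0 := by
      intro x
      rw [Fin.sum_univ_two]
      simp only [hsg_, hu_, if_pos rfl]
      rw [if_neg (by norm_num : ¬((1 : Fin 2) = 0)), if_neg (by norm_num : ¬((1 : Fin 2) = 0))]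
      by_cases h2 : dist u₂ s ≤ dist (x : X) s
      · have h1 : dist u₁ s ≤ dist (x : X) s := le_trans h12 h2
        rw [if_pos h1, if_pos h2, if_neg (fun hh => absurd hh.2 (not_lt.mpr h2))]; ring
      · by_cases h1 : dist u₁ s ≤ dist (x : X) s
        · rw [if_pos h1, if_neg h2, if_pos ⟨h1, not_le.mp h2⟩]; ring
        · rw [if_neg h1, if_neg h2, if_neg (fun hh => h1 hh.1)]; ring
    rw [Finset.sum_congr rfl (fun x _ => hinner x), Finset.sum_coe_sort C
      (fun y => if dist u₁ s ≤ dist y s ∧ dist y s < dist u₂ s then 1 - 2 * p else 0)]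
    rw [Finset.sum_ite, Finset.sum_const, Finset.sum_const_zero, add_zero, nsmul_eq_mul]
    rw [hμS, hgdef, hG]
    ring
  -- integrability
  have hint : ∀ i ∈ (Finset.univ : Finset (C × Fin 2)),
      Integrable (fun ω => Real.exp (t * Y i ω)) P := by
    intro i _
    rw [hfun i]
    exact aux_integrable_bool P (hmeas _ _) _ 1
  have hSint : Integrable (fun ω => Real.exp (t * (∑ i : C × Fin 2, Y i) ω)) P :=
    hYindep.integrable_exp_mul_sum hYmeas hint
  have hchern := measure_le_le_exp_mul_mgf (X := ∑ i : C × Fin 2, Y i) (μ := P) 0 ht0 hSint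
  have hprod : mgf (∑ i : C × Fin 2, Y i) P t = ∏ i : C × Fin 2, mgf (Y i) P t :=
    hYindep.mgf_sum hYmeas Finset.univ
  have hprodle : ∏ i : C × Fin 2, mgf (Y i) P t
      ≤ ∏ i : C × Fin 2, Real.exp (t * (sg i * q i) + t ^ 2 * c ^ 2 / 2) :=
    Finset.prod_le_prod (fun i _ => mgf_nonneg) (fun i _ => hmgf_le i)
  have hexps : ∏ i : C × Fin 2, Real.exp (t * (sg i * q i) + t ^ 2 * c ^ 2 / 2)
      = Real.exp (∑ i : C × Fin 2, (t * (sg i * q i) + t ^ 2 * c ^ 2 / 2)) :=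
    (Real.exp_sum _ _).symm
  have hcard : (Fintype.card (C × Fin 2) : ℝ) = 2 * K := by
    rw [Fintype.card_prod, Fintype.card_coe, Fintype.card_fin, hK]
    push_cast; ring
  have hsumexp : ∑ i : C × Fin 2, (t * (sg i * q i) + t ^ 2 * c ^ 2 / 2)
      = t * μS + K * (t ^ 2 * c ^ 2) := by
    rw [Finset.sum_add_distrib, ← Finset.mul_sum, hmeans, Finset.sum_const, nsmul_eq_mul,
      Finset.card_univ]
    rw [show ((Fintype.card (C × Fin 2) : ℝ)) * (t ^ 2 * c ^ 2 / 2)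
      = (2 * K) * (t ^ 2 * c ^ 2 / 2) by rw [hcard]]
    ring
  -- numeric bound on the exponent
  have hnum : t * μS + K * (t ^ 2 * c ^ 2) ≤ -(2 * L) := by
    rw [ht, hμS, hc]
    exact aux_numeric p K L g hp0 hp' hK1 hL hg0 hg2
  -- final probability bound for the bad event
  have hn0 : ((n : ℝ)) ≠ 0 := ne_of_gt (by linarith)
  have hexp2 : Real.exp (-(2 * L)) = δ ^ 2 / (n : ℝ) ^ 2 := by
    rw [show -(2 * L) = -L + -L by ring, Real.exp_add, Real.exp_neg,
      Real.exp_log (div_pos (by linarith) hδ0)]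
    field_simp [hδ0.ne']
  have hbad : (P {ω | (∑ i : C × Fin 2, Y i) ω ≤ 0}).toReal ≤ δ / (n : ℝ) ^ 2 := by
    have hδ2 : δ ^ 2 / (n : ℝ) ^ 2 ≤ δ / (n : ℝ) ^ 2 := by
      apply div_le_div_of_nonneg_right ?_ ?_ <;> nlinarith
    calc (P {ω | (∑ i : C × Fin 2, Y i) ω ≤ 0}).toReal
        ≤ Real.exp (-t * 0) * mgf (∑ i : C × Fin 2, Y i) P t := hchern
      _ = mgf (∑ i : C × Fin 2, Y i) P t := by
          rw [mul_zero, Real.exp_zero, one_mul]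
      _ ≤ Real.exp (t * μS + K * (t ^ 2 * c ^ 2)) := by
          rw [hprod]
          calc ∏ i : C × Fin 2, mgf (Y i) P t
              ≤ ∏ i : C × Fin 2, Real.exp (t * (sg i * q i) + t ^ 2 * c ^ 2 / 2) := hprodle
            _ = Real.exp (∑ i : C × Fin 2, (t * (sg i * q i) + t ^ 2 * c ^ 2 / 2)) := hexps
            _ = Real.exp (t * μS + K * (t ^ 2 * c ^ 2)) := by rw [hsumexp]
      _ ≤ Real.exp (-(2 * L)) := Real.exp_le_exp.mpr hnum
      _ = δ ^ 2 / (n : ℝ) ^ 2 := hexp2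
      _ ≤ δ / (n : ℝ) ^ 2 := hδ2
  -- identify the good event
  have hSm : Measurable (∑ i : C × Fin 2, Y i) := by
    have hfe : (∑ i : C × Fin 2, Y i) = fun ω => ∑ i : C × Fin 2, Y i ω := by
      funext ω; simp
    rw [hfe]
    exact Finset.measurable_sum _ (fun i _ => hYmeas i)
  have hSeval : ∀ ω, (∑ i : C × Fin 2, Y i) ω
      = ((C.filter fun x => B x u₁ ω = true).card : ℝ)
        - ((C.filter fun x => B x u₂ ω = true).card : ℝ) := by
    intro ω
    rw [Finset.sum_apply, Fintype.sum_prod_type]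
    have hx : ∀ x : {y // y ∈ C}, ∑ j : Fin 2, Y (x, j) ω
        = (if B (x : X) u₁ ω = true then (1:ℝ) else 0)
          - (if B (x : X) u₂ ω = true then (1:ℝ) else 0) := by
      intro x
      rw [Fin.sum_univ_two]
      simp only [hY, hsg_, hu_]
      norm_num
      by_cases h : B (↑x) u₂ ω = true <;> simp [h] <;> ring
    rw [Finset.sum_congr rfl (fun x _ => hx x), Finset.sum_sub_distrib,
      Finset.sum_coe_sort C (fun y => if B y u₁ ω = true then (1:ℝ) else 0),
      Finset.sum_coe_sort C (fun y => if B y u₂ ω = true then (1:ℝ) else 0),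
      Finset.sum_boole, Finset.sum_boole]
  have hA : MeasurableSet {ω | (∑ i : C × Fin 2, Y i) ω ≤ 0} :=
    measurableSet_le hSm measurable_const
  have hev : {ω | (C.filter (fun x => B x u₂ ω = true)).card <
        (C.filter (fun x => B x u₁ ω = true)).card}
      = {ω | (∑ i : C × Fin 2, Y i) ω ≤ 0}ᶜ := by
    ext ω
    simp only [Set.mem_setOf_eq, Set.mem_compl_iff, not_le, hSeval ω, sub_pos, Nat.cast_lt]
  rw [hev]
  have hadd := measure_add_measure_compl (μ := P) hA
  rw [measure_univ] at hadd
  have hadd' : (P {ω | (∑ i : C × Fin 2, Y i) ω ≤ 0}).toReal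
      + (P ({ω | (∑ i : C × Fin 2, Y i) ω ≤ 0}ᶜ)).toReal = 1 := by
    rw [← ENNReal.toReal_add (measure_ne_top P _) (measure_ne_top P _), hadd,
      ENNReal.toReal_one]
  linarith [hbad, hadd']
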